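/- Let n ≥ 1, let [k_n, k_{n−1}, …, k_1] be an admissible sequence of nonnegative integers and let w = c_{k_n,n} c_{k_{n−1},n−1} ⋯ c_{k_1,1} ∈ S_{2n}. Then for each 1 ≤ i ≤ n one has k_i = max(max_{i<j≤n}(k_j + i + 1 − j), i) if and only if 1 ≤ w(n+i) ≤ n. -/

import Mathlib

/-- The subgroup `S ⊆ S_{2n}` of permutations fixing each of the last `n` points
(`n+1, …, 2n` in one-based terms, i.e. the indices `i` with `n ≤ i` in zero-based terms). -/
def Sfix (n : ℕ) : Set (Equiv.Perm (Fin (2 * n))) :=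
  {g | ∀ i : Fin (2 * n), n ≤ (i : ℕ) → g i = i}

/-- The double coset `O_σ = {g σ h : g, h ∈ S}`. -/
def dcoset (n : ℕ) (σ : Equiv.Perm (Fin (2 * n))) : Set (Equiv.Perm (Fin (2 * n))) :=
  {t | ∃ g ∈ Sfix n, ∃ h ∈ Sfix n, t = g * σ * h}

/-- The length of a permutation: its number of inversions. -/
noncomputable def len (n : ℕ) (σ : Equiv.Perm (Fin (2 * n))) : ℕ :=
  {p : Fin (2 * n) × Fin (2 * n) | p.1 < p.2 ∧ σ p.2 < σ p.1}.ncard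

/-- The adjacent transposition `s_i = (i, i+1)` of `{1, …, m}` (one-based), i.e. the swap
of the zero-based positions `i-1` and `i`; it is the identity for out-of-range `i`. -/
def sTrans (m i : ℕ) : Equiv.Perm (Fin m) :=
  if h : 1 ≤ i ∧ i < m then
    Equiv.swap ⟨i - 1, by omega⟩ ⟨i, h.2⟩
  else 1

/-- The cycle `c_{k,j} = s_{j+n-k} s_{j+n-k+1} ⋯ s_{j+n-1} ∈ S_{2n}` (with `c_{0,j} = e`). -/
def cyc (n k j : ℕ) : Equiv.Perm (Fin (2 * n)) :=
  ((List.range k).map fun t => sTrans (2 * n) (j + n - k + t)).prod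

/-- The product `c_{k_n,n} c_{k_{n-1},n-1} ⋯ c_{k_1,1} ∈ S_{2n}` associated to a sequence
`[k_n, …, k_1]` (encoded as a function `k : ℕ → ℕ` on the indices `1, …, n`). -/
def cycProd (n : ℕ) (k : ℕ → ℕ) : Equiv.Perm (Fin (2 * n)) :=
  ((List.range n).map fun t => cyc n (k (n - t)) (n - t)).prod

/-- The bound `max (max_{j < i ≤ n} (k_i + j + 1 - i)) j` appearing in admissibility. -/
def admBound (n : ℕ) (k : ℕ → ℕ) (j : ℕ) : ℕ :=
  max ((Finset.Ioc j n).sup fun i => k i + j + 1 - i) j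

/-- A sequence `[k_n, …, k_1]` of nonnegative integers is admissible if
`k_j ≤ max (max_{j < i ≤ n} (k_i + j + 1 - i)) j` for every `1 ≤ j ≤ n`. -/
def Admissible (n : ℕ) (k : ℕ → ℕ) : Prop :=
  ∀ j, 1 ≤ j → j ≤ n → k j ≤ admBound n k j

lemma sTrans_apply (m i : ℕ) (h1 : 1 ≤ i) (h2 : i < m) (x : Fin m) :
    (sTrans m i x : ℕ) = if (x:ℕ) = i - 1 then i else if (x:ℕ) = i then i - 1 else (x:ℕ) := by
  unfold sTrans
  rw [dif_pos ⟨h1, h2⟩]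
  by_cases ha : (x:ℕ) = i - 1
  · rw [if_pos ha, show x = (⟨i-1, by omega⟩ : Fin m) from Fin.ext ha, Equiv.swap_apply_left]
  · rw [if_neg ha]
    by_cases hb : (x:ℕ) = i
    · rw [if_pos hb, show x = (⟨i, h2⟩ : Fin m) from Fin.ext hb, Equiv.swap_apply_right]
    · rw [if_neg hb, Equiv.swap_apply_of_ne_of_ne]
      · intro h; exact ha (by rw [h])
      · intro h; exact hb (by rw [h])

lemma cyc_succ (n k j : ℕ) (h : k + 1 ≤ j + n) :
    cyc n (k+1) j = sTrans (2*n) (j+n-(k+1)) * cyc n k j := by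
  unfold cyc
  rw [List.range_succ_eq_map, List.map_cons, List.prod_cons, List.map_map]
  simp only [Nat.add_zero]
  have hmap : List.map ((fun t => sTrans (2 * n) (j + n - (k + 1) + t)) ∘ Nat.succ)
      (List.range k) = List.map (fun t => sTrans (2 * n) (j + n - k + t)) (List.range k) :=
    List.map_congr_left fun t _ => by
      simp only [Function.comp_apply]
      congr 1
      omega
  rw [hmap]

lemma cyc_apply (n : ℕ) : ∀ (k : ℕ), ∀ (j : ℕ), k ≤ n → 1 ≤ j → j ≤ n → ∀ x : Fin (2*n),
    (cyc n k j x : ℕ) = if (x:ℕ) = j+n-1 then j+n-1-k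
      else if j+n-1-k ≤ (x:ℕ) ∧ (x:ℕ) < j+n-1 then (x:ℕ)+1 else (x:ℕ) := by
  intro k
  induction k with
  | zero =>
    intro j hk hj1 hj2 x
    simp only [cyc, List.range_zero, List.map_nil, List.prod_nil, Equiv.Perm.coe_one, id_eq]
    split_ifs <;> omega
  | succ k ih =>
    intro j hk hj1 hj2 x
    have hx := x.isLt
    rw [cyc_succ n k j (by omega), Equiv.Perm.mul_apply,
      sTrans_apply (2*n) (j+n-(k+1)) (by omega) (by omega),
      ih j (by omega) hj1 hj2 x]
    split_ifs <;> omega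

lemma admBound_n (n : ℕ) (k : ℕ → ℕ) : admBound n k n = n := by
  simp [admBound, Finset.Ioc_self]

lemma self_le_admBound (n : ℕ) (k : ℕ → ℕ) (j : ℕ) : j ≤ admBound n k j :=
  le_max_right _ _

lemma term_le_admBound (n : ℕ) (k : ℕ → ℕ) {j l : ℕ} (hl : l ∈ Finset.Ioc j n) :
    k l + j + 1 - l ≤ admBound n k j := by
  refine le_trans ?_ (le_max_left _ _)
  exact Finset.le_sup (f := fun i => k i + j + 1 - i) hl

lemma k_succ_le_admBound (n : ℕ) (k : ℕ → ℕ) {j : ℕ} (h : j < n) :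
    k (j+1) ≤ admBound n k j := by
  have := term_le_admBound n k (j := j) (l := j+1) (Finset.mem_Ioc.mpr ⟨lt_add_one j, h⟩)
  omega

lemma admBound_succ_le (n : ℕ) (k : ℕ → ℕ) {j : ℕ} (h : j < n) :
    admBound n k (j+1) ≤ admBound n k j + 1 := by
  apply max_le
  · apply Finset.sup_le
    intro l hl
    rw [Finset.mem_Ioc] at hl
    have h2 := term_le_admBound n k (j := j) (l := l) (Finset.mem_Ioc.mpr ⟨by omega, hl.2⟩)
    omega
  · have := self_le_admBound n k j
    omega

lemma admBound_le_max (n : ℕ) (k : ℕ → ℕ) {j : ℕ} (h : j < n) :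
    admBound n k j ≤ max (k (j+1)) (admBound n k (j+1) - 1) := by
  have hself : j + 1 ≤ admBound n k (j+1) := self_le_admBound n k (j+1)
  apply max_le
  · apply Finset.sup_le
    intro l hl
    rw [Finset.mem_Ioc] at hl
    rcases eq_or_lt_of_le (by omega : j + 1 ≤ l) with he | hlt
    · have : k l + j + 1 - l = k (j+1) := by rw [← he]; omega
      rw [this]; exact le_max_left _ _
    · have h2 := term_le_admBound n k (j := j+1) (l := l) (Finset.mem_Ioc.mpr ⟨hlt, hl.2⟩)
      have : k l + j + 1 - l ≤ admBound n k (j+1) - 1 := by omega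
      exact le_trans this (le_max_right _ _)
  · exact le_trans (by omega) (le_max_right (k (j+1)) _)

lemma admBound_le_n (n : ℕ) (k : ℕ → ℕ) (hadm : Admissible n k) :
    ∀ j, j ≤ n → admBound n k j ≤ n := by
  have H : ∀ t, admBound n k (n - t) ≤ n := by
    intro t
    induction t with
    | zero => simp [admBound_n]
    | succ t ih =>
      by_cases h : n - (t+1) = n - t
      · rw [h]; exact ih
      · have hj : n - (t+1) < n := by omega
        have he : n - (t+1) + 1 = n - t := by omega
        have h1 := admBound_le_max n k hj
        rw [he] at h1
        have h2 := hadm (n - t) (by omega) (by omega)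
        have h3 := max_le_iff.mp h1
        omega
  intro j hj
  have := H (n - j)
  rwa [show n - (n - j) = j by omega] at this

lemma k_le_n (n : ℕ) (k : ℕ → ℕ) (hadm : Admissible n k) {j : ℕ} (h1 : 1 ≤ j) (h2 : j ≤ n) :
    k j ≤ n :=
  le_trans (hadm j h1 h2) (admBound_le_n n k hadm j h2)

def dSeq (k : ℕ → ℕ) (i : ℕ) : ℕ → ℕ
  | 0 => k i
  | t + 1 => if dSeq k i t < k (i + t + 1) then dSeq k i t else dSeq k i t + 1

lemma dSeq_le (k : ℕ → ℕ) (i : ℕ) : ∀ t, dSeq k i t ≤ k i + t := by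
  intro t
  induction t with
  | zero => simp [dSeq]
  | succ t ih => simp only [dSeq]; split_ifs <;> omega

lemma dSeq_ge (n : ℕ) (k : ℕ → ℕ) {i : ℕ} (hsat : k i = admBound n k i) :
    ∀ t, i + t ≤ n → admBound n k (i + t) ≤ dSeq k i t := by
  intro t
  induction t with
  | zero => intro _; simpa [dSeq] using hsat.ge
  | succ t ih =>
    intro ht
    have h1 := ih (by omega)
    have h2 := k_succ_le_admBound n k (j := i + t) (by omega)
    have h3 := admBound_succ_le n k (j := i + t) (by omega)
    have hneg : ¬ (dSeq k i t < k (i + t + 1)) := by omega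
    simp only [dSeq, if_neg hneg]
    rw [show i + (t+1) = i + t + 1 by omega] at *
    omega

lemma dSeq_lt (n : ℕ) (k : ℕ → ℕ) (hadm : Admissible n k) {i : ℕ}
    (hlt : k i < admBound n k i) :
    ∀ t, i + t ≤ n → dSeq k i t < admBound n k (i + t) := by
  intro t
  induction t with
  | zero => intro _; simpa [dSeq] using hlt
  | succ t ih =>
    intro ht
    have h1 := ih (by omega)
    have hself : i + t + 1 ≤ admBound n k (i + t + 1) := self_le_admBound n k _
    have hadm1 := hadm (i + t + 1) (by omega) (by omega)
    have hmax := admBound_le_max n k (j := i + t) (by omega)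
    rw [show i + (t+1) = i + t + 1 by omega] at *
    simp only [dSeq]
    split_ifs with hc
    · omega
    · have : admBound n k (i + t) ≤ admBound n k (i + t + 1) - 1 := by
        rcases max_le_iff.mp (le_refl (max (k (i + t + 1)) (admBound n k (i + t + 1) - 1))) with _
        omega
      omega

def Lprod (n : ℕ) (k : ℕ → ℕ) (a b : ℕ) : Equiv.Perm (Fin (2 * n)) :=
  ((List.range b).map fun t => cyc n (k (a - t)) (a - t)).prod

lemma Lprod_succ (n : ℕ) (k : ℕ → ℕ) (a b : ℕ) :
    Lprod n k a (b+1) = cyc n (k a) a * Lprod n k (a-1) b := by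
  unfold Lprod
  rw [List.range_succ_eq_map, List.map_cons, List.prod_cons, List.map_map]
  simp only [Nat.sub_zero]
  have hmap : List.map ((fun t => cyc n (k (a - t)) (a - t)) ∘ Nat.succ) (List.range b)
      = List.map (fun t => cyc n (k (a - 1 - t)) (a - 1 - t)) (List.range b) :=
    List.map_congr_left fun t _ => by
      simp only [Function.comp_apply]
      rw [show a - Nat.succ t = a - 1 - t from by omega]
  rw [hmap]

lemma Lprod_idx_lt (n i : ℕ) (hi1 : 1 ≤ i) (hi2 : i ≤ n) : n + i - 1 < 2 * n := by
  omega

lemma Lprod_eval (n : ℕ) (hn : 1 ≤ n) (k : ℕ → ℕ) (hadm : Admissible n k)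
    (i : ℕ) (hi1 : 1 ≤ i) (hi2 : i ≤ n) :
    ∀ s, s ≤ n → ((Lprod n k s s) ⟨n + i - 1, Lprod_idx_lt n i hi1 hi2⟩ : ℕ) =
      if s < i then n + i - 1 else n + s - 1 - dSeq k i (s - i) := by
  intro s
  induction s with
  | zero =>
    intro _
    simp only [Lprod, List.range_zero, List.map_nil, List.prod_nil, Equiv.Perm.coe_one, id_eq]
    rw [if_pos (by omega)]
  | succ s ih =>
    intro hs
    have hks : k (s+1) ≤ n := k_le_n n k hadm (by omega) hs
    have hki : k i ≤ n := k_le_n n k hadm hi1 hi2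
    have hIH := ih (by omega)
    have hd := dSeq_le k i (s - i)
    rw [Lprod_succ, Equiv.Perm.mul_apply,
      cyc_apply n (k (s+1)) (s+1) hks (by omega) hs]
    simp only [Nat.add_sub_cancel] at *
    rw [hIH]
    rcases lt_trichotomy (s+1) i with h | h | h
    · rw [if_pos (by omega : s < i), if_pos h]
      split_ifs <;> omega
    · rw [if_pos (by omega : s < i), if_neg (by omega : ¬ s + 1 < i),
        show s + 1 - i = 0 by omega]
      simp only [dSeq]
      rw [← h]
      split_ifs <;> omega
    · rw [if_neg (by omega : ¬ s < i), if_neg (by omega : ¬ s + 1 < i),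
        show s + 1 - i = (s - i) + 1 by omega]
      simp only [dSeq]
      rw [show i + (s - i) + 1 = s + 1 by omega]
      split_ifs <;> omega

/-- For an admissible sequence `[k_n, …, k_1]` and `w = c_{k_n,n} ⋯ c_{k_1,1}`, one has
`k_i = max (max_{i < j ≤ n} (k_j + i + 1 - j)) i` if and only if `1 ≤ w(n+i) ≤ n`
(in one-based terms; in zero-based terms, the value of `w` at `n + i - 1` is `< n`). -/
theorem cycProd_saturated_iff (n : ℕ) (hn : 1 ≤ n) (k : ℕ → ℕ) (hk : Admissible n k)
    (i : ℕ) (hi1 : 1 ≤ i) (hi2 : i ≤ n) :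
    k i = admBound n k i ↔ ((cycProd n k) ⟨n + i - 1, by omega⟩ : ℕ) < n := by
  have hkey : ((cycProd n k) ⟨n + i - 1, by omega⟩ : ℕ) = n + n - 1 - dSeq k i (n - i) := by
    have h := Lprod_eval n hn k hk i hi1 hi2 n le_rfl
    rw [if_neg (by omega)] at h
    exact h
  rw [hkey]
  have hd := dSeq_le k i (n - i)
  have hki : k i ≤ n := k_le_n n k hk hi1 hi2
  constructor
  · intro h
    have h2 := dSeq_ge n k h (n - i) (by omega)
    rw [show i + (n - i) = n by omega, admBound_n] at h2
    omega
  · intro h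
    by_contra hne
    have hlt : k i < admBound n k i := lt_of_le_of_ne (hk i hi1 hi2) hne
    have h2 := dSeq_lt n k hk hlt (n - i) (by omega)
    rw [show i + (n - i) = n by omega, admBound_n] at h2
    omega
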